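/- Let F be a field and x, y : Fin 2 → F with x 0 · y 0 + x 1 · y 1 ≠ 0. Then there exists an invertible matrix A ∈ GL_2(F) such that, setting x' = A *ᵥ x (the matrix-vector product) and y' = y ᵥ* A⁻¹ (the vector-matrix product), one has x' 0 · y' 0 = 0, x' 1 ≠ 0, and y' 1 ≠ 0. -/

import Mathlib

open Matrix
open scoped MatrixGroups

/-- **The 2×2 reduction lemma.**
If `x, y : Fin 2 → F` satisfy `x 0 * y 0 + x 1 * y 1 ≠ 0`, then there is an invertible matrix
`A ∈ GL₂(F)` such that, for `x' = A *ᵥ x` and `y' = y ᵥ* A⁻¹`, one has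
`x' 0 * y' 0 = 0`, `x' 1 ≠ 0` and `y' 1 ≠ 0`. -/
theorem exists_GL2_reduction {F : Type*} [Field F] (x y : Fin 2 → F)
    (h : x 0 * y 0 + x 1 * y 1 ≠ 0) :
    ∃ A : GL (Fin 2) F,
      ((A : Matrix (Fin 2) (Fin 2) F) *ᵥ x) 0 *
        (y ᵥ* ((A⁻¹ : GL (Fin 2) F) : Matrix (Fin 2) (Fin 2) F)) 0 = 0 ∧
      ((A : Matrix (Fin 2) (Fin 2) F) *ᵥ x) 1 ≠ 0 ∧
      (y ᵥ* ((A⁻¹ : GL (Fin 2) F) : Matrix (Fin 2) (Fin 2) F)) 1 ≠ 0 := by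
  by_cases hx1 : x 1 = 0
  · -- swap matrix
    have hM : (!![(0:F),1;1,0]) * (!![(0:F),1;1,0]) = 1 := by
      simp [Matrix.mul_fin_two, Matrix.one_fin_two]
    refine ⟨⟨!![(0:F),1;1,0], !![(0:F),1;1,0], hM, hM⟩, ?_, ?_, ?_⟩ <;>
      simp [Matrix.mulVec, Matrix.vecMul, dotProduct, Fin.sum_univ_two, hx1]
    · exact fun h0 => h (by simp [hx1, h0])
    · intro h0
      exact h (by simp [hx1, h0])
  · -- shear matrix
    have hM : (!![(1:F), -(x 0 / x 1); 0, 1]) * (!![(1:F), x 0 / x 1; 0, 1]) = 1 := by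
      simp [Matrix.mul_fin_two, Matrix.one_fin_two]
    have hM' : (!![(1:F), x 0 / x 1; 0, 1]) * (!![(1:F), -(x 0 / x 1); 0, 1]) = 1 := by
      simp [Matrix.mul_fin_two, Matrix.one_fin_two]
    refine ⟨⟨!![(1:F), -(x 0 / x 1); 0, 1], !![(1:F), x 0 / x 1; 0, 1], hM, hM'⟩, ?_, ?_, ?_⟩ <;>
      simp [Matrix.mulVec, Matrix.vecMul, dotProduct, Fin.sum_univ_two]
    · left; field_simp; ring
    · exact hx1
    · intro h0
      apply h
      have : (x 0 * y 0 + x 1 * y 1) / x 1 = 0 := by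
        rw [← h0]; field_simp
      field_simp at this
      linear_combination this
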